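/- A chain complex X over A is I-trivial (Hom(X,W) acyclic for all W ∈ I) if and only if for every integer i the induced morphism d_i : coker(d_{i+1}) → X_{i-1} is an I-monomorphism. -/

import Mathlib

open CategoryTheory CategoryTheory.Limits

universe v u

variable {A : Type u} [Category.{v} A] [Abelian A]

/-- The `Hom`-complex `Hom(X, W)` of abelian groups associated to a chain complex `X`
over `A` and an object `W` of `A`; following the convention that `Hom(X_k, W)` is placed
in (cohomological) degree `-k`, its degree `n` component is `Hom(X_{-n}, W)`. -/
noncomputable def homComplex (X : ChainComplex A ℤ) (W : A) : ChainComplex AddCommGrpCat ℤ :=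
  ChainComplex.of (fun n => AddCommGrpCat.of (X.X (-n) ⟶ W))
    (fun n => AddCommGrpCat.ofHom (AddMonoidHom.mk' (fun g => X.d (-n) (-(n+1)) ≫ g)
      (fun _ _ => Preadditive.comp_add _ _ _ _ _ _)))
    (fun n => by
      ext g
      show X.d (-n) (-(n+1)) ≫ (X.d (-(n+1)) (-(n+1+1)) ≫ g) = 0
      rw [← Category.assoc, HomologicalComplex.d_comp_d, Limits.zero_comp])

lemma homComplex_d (X : ChainComplex A ℤ) (W : A) (j : ℤ) :
    (homComplex X W).d (j+1) j = AddCommGrpCat.ofHom (AddMonoidHom.mk' (fun g => X.d (-j) (-(j+1)) ≫ g)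
      (fun _ _ => Preadditive.comp_add _ _ _ _ _ _)) :=
  by dsimp only [homComplex]; exact ChainComplex.of_d _ _ j

/-- The map of `Hom`-complexes induced by a chain map, given by precomposition. -/
noncomputable def homComplexMap {X Y : ChainComplex A ℤ} (f : X ⟶ Y) (W : A) :
    homComplex Y W ⟶ homComplex X W where
  f n := AddCommGrpCat.ofHom (AddMonoidHom.mk' (fun g => f.f (-n) ≫ g)
      (fun _ _ => Preadditive.comp_add _ _ _ _ _ _))
  comm' i j hij := by
    obtain rfl : i = j + 1 := hij.symm
    ext g
    show (homComplex X W).d (j+1) j (f.f (-(j+1)) ≫ g) = f.f (-j) ≫ ((homComplex Y W).d (j+1) j g)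
    rw [homComplex_d, homComplex_d]
    show X.d (-j) (-(j+1)) ≫ (f.f (-(j+1)) ≫ g) = f.f (-j) ≫ (Y.d (-j) (-(j+1)) ≫ g)
    revert g; intro (g : Y.X (-(j+1)) ⟶ W)
    rw [← Category.assoc, ← Category.assoc, HomologicalComplex.Hom.comm]

/-- `X` is `I`-trivial if for every `W ∈ I` the `Hom`-complex `Hom(X, W)` has trivial
(co)homology in all degrees. -/
def IsITrivial (I : Set A) (X : ChainComplex A ℤ) : Prop :=
  ∀ W ∈ I, ∀ n : ℤ, Limits.IsZero ((homComplex X W).homology n)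

/-- `f : M ⟶ N` is an `I`-monomorphism if for every `W ∈ I`, precomposition with `f`
induces a surjection `Hom(N, W) → Hom(M, W)`. -/
def IsIMono (I : Set A) {M N : A} (f : M ⟶ N) : Prop :=
  ∀ W ∈ I, Function.Surjective (fun g : N ⟶ W => f ≫ g)

lemma key_homComplex_isZero_iff (X : ChainComplex A ℤ) (W : A) (n : ℤ) :
    IsZero ((homComplex X W).homology n) ↔
      ∀ g : X.X (-n) ⟶ W, X.d (-(n-1)) (-n) ≫ g = 0 →
        ∃ h : X.X (-(n+1)) ⟶ W, X.d (-n) (-(n+1)) ≫ h = g := by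
  rw [← HomologicalComplex.exactAt_iff_isZero_homology,
    (homComplex X W).exactAt_iff' (n+1) n (n-1) (by simp) (by simp),
    ShortComplex.ab_exact_iff]
  dsimp only [HomologicalComplex.sc', HomologicalComplex.shortComplexFunctor']
  have e1 := homComplex_d X W n
  have e2 := homComplex_d X W (n-1)
  rw [sub_add_cancel] at e2
  constructor
  · intro H g hg
    obtain ⟨h, hh⟩ := H g (by rw [e2]; exact hg)
    exact ⟨h, by rw [e1] at hh; exact hh⟩
  · intro H g hg
    rw [e2] at hg
    obtain ⟨h, hh⟩ := H g hg
    exact ⟨h, by rw [e1]; exact hh⟩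

/-- A chain complex `X` is `I`-trivial iff for every `i` the morphism
`coker(d_{i+1}) ⟶ X_{i-1}` induced by `d_i` is an `I`-monomorphism. -/
theorem isITrivial_iff_coker_isIMono (I : Set A) (X : ChainComplex A ℤ) :
    IsITrivial I X ↔
      ∀ i : ℤ, IsIMono I
        (cokernel.desc (X.d (i+1) i) (X.d i (i-1)) (X.d_comp_d _ _ _)) := by
  constructor
  · intro H i W hW φ
    have K := key_homComplex_isZero_iff X W (-i)
    rw [show -(-i) = i by ring, show -(-i-1) = i+1 by ring, show -(-i+1) = i-1 by ring] at K
    have F := K.mp (H W hW (-i))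
    obtain ⟨h, hh⟩ := F (cokernel.π _ ≫ φ)
      (by rw [← Category.assoc, cokernel.condition, zero_comp])
    refine ⟨h, ?_⟩
    show cokernel.desc _ _ _ ≫ h = φ
    rw [← cancel_epi (cokernel.π (X.d (i+1) i)), cokernel.π_desc_assoc, hh]
  · intro H W hW n
    have K := key_homComplex_isZero_iff X W n
    rw [show -(n-1) = -n+1 by ring, show -(n+1) = -n-1 by ring] at K
    refine K.mpr (fun g hg => ?_)
    obtain ⟨h, hh⟩ := H (-n) W hW (cokernel.desc (X.d (-n+1) (-n)) g hg)
    refine ⟨h, ?_⟩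
    have := congrArg (fun t => cokernel.π (X.d (-n+1) (-n)) ≫ t) hh
    simpa using this
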